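/- The set G of all functions f from the unit sphere S² ⊂ ℝ³ to ℝ satisfying f(x) + f(y) + f(z) = 0 for every orthonormal triple x, y, z ∈ S² has cardinality 2^(2^ℵ₀); in particular, it has strictly larger cardinality than the set of such functions of the form x ↦ ⟨x, W x⟩ with W a symmetric operator, which has cardinality 2^ℵ₀. -/

import Mathlib

open Cardinal

noncomputable section FrameAux

local notation "E3" => EuclideanSpace ℝ (Fin 3)

lemma sum_sq_coord (i0 : Fin 3) (x y z : E3) (hx : ‖x‖ = 1) (hy : ‖y‖ = 1) (hz : ‖z‖ = 1)
    (hxy : (inner ℝ x y : ℝ) = 0) (hxz : (inner ℝ x z : ℝ) = 0) (hyz : (inner ℝ y z : ℝ) = 0) :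
    x i0 ^ 2 + y i0 ^ 2 + z i0 ^ 2 = 1 := by
  have hx' : (inner ℝ x x : ℝ) = 1 := by rw [real_inner_self_eq_norm_sq, hx]; norm_num
  have hy' : (inner ℝ y y : ℝ) = 1 := by rw [real_inner_self_eq_norm_sq, hy]; norm_num
  have hz' : (inner ℝ z z : ℝ) = 1 := by rw [real_inner_self_eq_norm_sq, hz]; norm_num
  have horth : Orthonormal ℝ ![x, y, z] := by
    rw [orthonormal_iff_ite]
    intro i j
    fin_cases i <;> fin_cases j <;>
      simp [hx, hy, hz, hx', hy', hz', hxy, hxz, hyz, real_inner_comm x y, real_inner_comm x z,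
        real_inner_comm y z]
  have hsp : ⊤ ≤ Submodule.span ℝ (Set.range ![x, y, z]) := by
    rw [horth.linearIndependent.span_eq_top_of_card_eq_finrank]
    simp [finrank_euclideanSpace_fin]
  let b := OrthonormalBasis.mk horth hsp
  have key := b.sum_inner_mul_inner (EuclideanSpace.single i0 (1 : ℝ))
    (EuclideanSpace.single i0 (1 : ℝ))
  have hb : ⇑b = ![x, y, z] := OrthonormalBasis.coe_mk horth hsp
  rw [hb] at key
  simp [Fin.sum_univ_three, EuclideanSpace.inner_single_left,
    EuclideanSpace.inner_single_right, EuclideanSpace.single_apply] at key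
  nlinarith [key]

lemma exists_sphere_sq {s : ℝ} (h0 : 0 ≤ s) (h1 : s ≤ 1) :
    ∃ x : Metric.sphere (0 : E3) 1, ((x : E3) 0) ^ 2 = s := by
  let v : E3 := (WithLp.equiv 2 (Fin 3 → ℝ)).symm ![Real.sqrt s, Real.sqrt (1 - s), 0]
  have hv0 : v 0 = Real.sqrt s := rfl
  have hv1 : v 1 = Real.sqrt (1 - s) := rfl
  have hv2 : v 2 = 0 := rfl
  have hnorm : ‖v‖ = 1 := by
    rw [EuclideanSpace.norm_eq, Fin.sum_univ_three, hv0, hv1, hv2,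
      Real.norm_eq_abs, Real.norm_eq_abs, Real.norm_eq_abs, sq_abs, sq_abs, sq_abs,
      Real.sq_sqrt h0, Real.sq_sqrt (by linarith)]
    norm_num
  exact ⟨⟨v, by simpa using hnorm⟩, by simp only [hv0, Real.sq_sqrt h0]⟩

lemma mk_E3 : #(EuclideanSpace ℝ (Fin 3)) = 𝔠 := by
  rw [Cardinal.mk_congr (WithLp.equiv 2 (Fin 3 → ℝ)), ← Cardinal.power_def, Cardinal.mk_real,
    Cardinal.mk_fin]
  exact power_nat_eq aleph0_le_continuum (by norm_num)

abbrev ιQ := Module.Basis.ofVectorSpaceIndex ℚ ℝ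

noncomputable def bQ : Module.Basis ιQ ℚ ℝ := Module.Basis.ofVectorSpace ℚ ℝ

lemma mk_iQ : #ιQ = 𝔠 := by rw [bQ.mk_eq_rank'', Real.rank_rat_real]

instance : Infinite ιQ := Cardinal.infinite_iff.mpr (by rw [mk_iQ]; exact aleph0_le_continuum)

noncomputable def i0Q : ιQ := Classical.arbitrary ιQ

noncomputable def gQ (c : ιQ → ℝ) : ℝ →ₗ[ℚ] ℝ := Module.Basis.constr bQ ℚ c

noncomputable def phiQ (c : ιQ → ℝ) (t : ℝ) : ℝ := gQ c t - t * gQ c 1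

lemma phiQ_add (c : ιQ → ℝ) (a b : ℝ) : phiQ c (a + b) = phiQ c a + phiQ c b := by
  simp only [phiQ, map_add]; ring

lemma phiQ_one (c : ιQ → ℝ) : phiQ c 1 = 0 := by simp [phiQ]

lemma phiQ_int (c : ιQ → ℝ) (n : ℤ) : phiQ c (n : ℝ) = 0 := by
  have h : gQ c (n : ℝ) = n * gQ c 1 := by
    have h2 : ((n : ℝ)) = (n : ℚ) • (1 : ℝ) := by rw [Rat.smul_def]; push_cast; ring
    rw [h2, map_smul]
    simp only [Rat.smul_def]
    push_cast
    ring
  simp [phiQ, h]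

lemma phiQ_fract (c : ιQ → ℝ) (t : ℝ) : phiQ c t = phiQ c (Int.fract t) := by
  conv_lhs => rw [show t = Int.fract t + (⌊t⌋ : ℝ) by rw [Int.fract]; ring]
  rw [phiQ_add, phiQ_int]
  ring

lemma gQ_basis (c : ιQ → ℝ) (i : ιQ) : gQ c (bQ i) = c i := Module.Basis.constr_basis bQ ℚ c i

lemma phiQ_inj (c c' : ιQ → ℝ) (hc : c i0Q = 0) (hc' : c' i0Q = 0)
    (h : ∀ s : ℝ, 0 ≤ s → s ≤ 1 → phiQ c s = phiQ c' s) : c = c' := by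
  have hall : ∀ t, phiQ c t = phiQ c' t := by
    intro t
    rw [phiQ_fract c t, phiQ_fract c' t]
    exact h _ (Int.fract_nonneg t) (le_of_lt (Int.fract_lt_one t))
  have hgt : ∀ t : ℝ, gQ c t - gQ c' t = t * (gQ c 1 - gQ c' 1) := by
    intro t
    have := hall t
    simp only [phiQ] at this
    nlinarith [this]
  have hδ : gQ c 1 - gQ c' 1 = 0 := by
    have h2 := hgt (bQ i0Q)
    rw [gQ_basis, gQ_basis, hc, hc'] at h2
    have hne : bQ i0Q ≠ 0 := bQ.ne_zero i0Q
    have := h2.symm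
    rw [sub_zero] at this
    rcases mul_eq_zero.mp this with h3 | h3
    · exact absurd h3 hne
    · exact h3
  funext i
  have h2 := hgt (bQ i)
  rw [gQ_basis, gQ_basis, hδ, mul_zero, sub_eq_zero] at h2
  exact h2

end FrameAux

/-- The set `G` of all real functions on the unit sphere of `ℝ³` summing to `0` on
every orthonormal triple (no boundedness assumed). -/
def GSet : Set ((Metric.sphere (0 : EuclideanSpace ℝ (Fin 3)) 1) → ℝ) :=
  {f | ∀ x y z : Metric.sphere (0 : EuclideanSpace ℝ (Fin 3)) 1,
    (inner ℝ (x : EuclideanSpace ℝ (Fin 3)) (y : EuclideanSpace ℝ (Fin 3)) : ℝ) = 0 →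
    (inner ℝ (x : EuclideanSpace ℝ (Fin 3)) (z : EuclideanSpace ℝ (Fin 3)) : ℝ) = 0 →
    (inner ℝ (y : EuclideanSpace ℝ (Fin 3)) (z : EuclideanSpace ℝ (Fin 3)) : ℝ) = 0 →
    f x + f y + f z = 0}

noncomputable section Frame2

local notation "E3" => EuclideanSpace ℝ (Fin 3)
local notation "Sph" => Metric.sphere (0 : EuclideanSpace ℝ (Fin 3)) 1

def extQ (d : {i : ιQ // i ≠ i0Q} → ℝ) : ιQ → ℝ := fun i => if h : i = i0Q then 0 else d ⟨i, h⟩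

lemma extQ_i0 (d : {i : ιQ // i ≠ i0Q} → ℝ) : extQ d i0Q = 0 := dif_pos rfl

lemma extQ_ne (d : {i : ιQ // i ≠ i0Q} → ℝ) (i : {i : ιQ // i ≠ i0Q}) : extQ d i = d i := by
  rw [extQ, dif_neg i.2]

def FQ (d : {i : ιQ // i ≠ i0Q} → ℝ) : Sph → ℝ := fun x => phiQ (extQ d) ((x : E3) 0 ^ 2)

lemma norm_of_sphere (x : Sph) : ‖(x : E3)‖ = 1 := by
  have := x.2
  rwa [mem_sphere_zero_iff_norm] at this

lemma FQ_mem (d : {i : ιQ // i ≠ i0Q} → ℝ) : FQ d ∈ GSet := by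
  intro x y z hxy hxz hyz
  have hsum := sum_sq_coord 0 x y z (norm_of_sphere x) (norm_of_sphere y) (norm_of_sphere z)
    hxy hxz hyz
  show phiQ (extQ d) _ + phiQ (extQ d) _ + phiQ (extQ d) _ = 0
  rw [← phiQ_add, ← phiQ_add, hsum, phiQ_one]

lemma FQ_inj : Function.Injective FQ := by
  intro d d' h
  have hphi : ∀ s : ℝ, 0 ≤ s → s ≤ 1 → phiQ (extQ d) s = phiQ (extQ d') s := by
    intro s h0 h1
    obtain ⟨x, hx⟩ := exists_sphere_sq h0 h1
    have h2 := congrFun h x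
    simpa [FQ, hx] using h2
  have hext := phiQ_inj _ _ (extQ_i0 d) (extQ_i0 d') hphi
  funext i
  have h3 := congrFun hext i
  rwa [extQ_ne, extQ_ne] at h3

def e2E : E3 := EuclideanSpace.single 2 (1 : ℝ)

def Wc (c : ℝ) : E3 →ₗ[ℝ] E3 :=
  c • (LinearMap.id - (3 : ℝ) • LinearMap.smulRight (innerSL ℝ e2E).toLinearMap e2E)

lemma Wc_apply (c : ℝ) (v : E3) : Wc c v = c • v - (3 * c * v 2) • e2E := by
  simp only [Wc, e2E, LinearMap.smul_apply, LinearMap.sub_apply, LinearMap.id_apply,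
    LinearMap.smulRight_apply, ContinuousLinearMap.coe_coe, innerSL_apply_apply,
    EuclideanSpace.inner_single_left, map_one, one_mul]
  rw [smul_sub]
  congr 1
  rw [smul_smul, smul_smul]
  congr 1
  ring

lemma Wc_sym (c : ℝ) : (Wc c).IsSymmetric := by
  intro u v
  rw [Wc_apply, Wc_apply]
  simp only [inner_sub_left, inner_sub_right, real_inner_smul_left, real_inner_smul_right, e2E,
    EuclideanSpace.inner_single_left, EuclideanSpace.inner_single_right, map_one, one_mul,
    RCLike.star_def, RCLike.conj_to_real]
  ring

lemma Wc_quad (c : ℝ) (x : Sph) :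
    (inner ℝ (x : E3) (Wc c x) : ℝ) = c * (1 - 3 * ((x : E3) 2) ^ 2) := by
  have hx : (inner ℝ (x : E3) (x : E3) : ℝ) = 1 := by
    rw [real_inner_self_eq_norm_sq, norm_of_sphere]; norm_num
  rw [Wc_apply]
  simp only [inner_sub_right, real_inner_smul_right, e2E,
    EuclideanSpace.inner_single_right, map_one, one_mul, hx,
    RCLike.star_def, RCLike.conj_to_real]
  ring

def fq (c : ℝ) : Sph → ℝ := fun x => c * (1 - 3 * ((x : E3) 2) ^ 2)

lemma fq_mem (c : ℝ) : fq c ∈ GSet := by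
  intro x y z hxy hxz hyz
  have hsum := sum_sq_coord 2 x y z (norm_of_sphere x) (norm_of_sphere y) (norm_of_sphere z)
    hxy hxz hyz
  show fq c x + fq c y + fq c z = 0
  simp only [fq]
  linear_combination (-3 * c) * hsum

def sph_e0 : Sph := ⟨EuclideanSpace.single 0 (1 : ℝ), by
  rw [mem_sphere_zero_iff_norm, EuclideanSpace.norm_single]; norm_num⟩

lemma fq_e0 (c : ℝ) : fq c sph_e0 = c := by
  simp [fq, sph_e0, EuclideanSpace.single_apply]

end Frame2

/-- `G` has cardinality `2 ^ (2 ^ ℵ₀)`, strictly bigger than the set of its members of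
the quadratic form `x ↦ ⟨x, W x⟩` with `W` symmetric, which has cardinality `2 ^ ℵ₀`. -/
theorem card_unbounded_frame_functions :
    Cardinal.mk GSet = (2 : Cardinal) ^ ((2 : Cardinal) ^ Cardinal.aleph0) ∧
    Cardinal.mk {f ∈ GSet | ∃ W : EuclideanSpace ℝ (Fin 3) →ₗ[ℝ] EuclideanSpace ℝ (Fin 3),
      W.IsSymmetric ∧ ∀ x : Metric.sphere (0 : EuclideanSpace ℝ (Fin 3)) 1,
        f x = (inner ℝ (x : EuclideanSpace ℝ (Fin 3)) (W x) : ℝ)} = (2 : Cardinal) ^ Cardinal.aleph0 ∧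
    ((2 : Cardinal) ^ Cardinal.aleph0) < (2 : Cardinal) ^ ((2 : Cardinal) ^ Cardinal.aleph0) := by
  have hCC : ((2 : Cardinal) ^ aleph0) ^ ((2 : Cardinal) ^ aleph0)
      = (2 : Cardinal) ^ ((2 : Cardinal) ^ aleph0) := by
    rw [← power_mul]
    congr 1
    rw [two_power_aleph0]
    exact aleph0_mul_continuum
  refine ⟨?_, ?_, Cardinal.cantor _⟩
  · apply le_antisymm
    · calc #(GSet) ≤ #((Metric.sphere (0 : EuclideanSpace ℝ (Fin 3)) 1) → ℝ) :=
            Cardinal.mk_set_le _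
        _ = #ℝ ^ #(Metric.sphere (0 : EuclideanSpace ℝ (Fin 3)) 1) :=
            (Cardinal.power_def _ _).symm
        _ ≤ 𝔠 ^ 𝔠 := by
            rw [Cardinal.mk_real]
            apply power_le_power_left continuum_ne_zero
            rw [← mk_E3]
            exact Cardinal.mk_set_le _
        _ = _ := by rw [← two_power_aleph0]; exact hCC
    · have hmkι' : #{i : ιQ // i ≠ i0Q} = 𝔠 := by
        have h1 : #({i0Q} : Set ιQ) < #ιQ := by
          rw [Cardinal.mk_singleton, mk_iQ]
          exact one_lt_aleph0.trans_le aleph0_le_continuum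
        have h2 := Cardinal.mk_compl_of_infinite ({i0Q} : Set ιQ) h1
        rw [mk_iQ] at h2
        rw [← h2]
        exact Cardinal.mk_congr (Equiv.subtypeEquivRight (fun i => by simp))
      calc (2 : Cardinal) ^ ((2 : Cardinal) ^ aleph0)
          = #({i : ιQ // i ≠ i0Q} → ℝ) := by
            rw [← Cardinal.power_def, Cardinal.mk_real, hmkι', ← two_power_aleph0]
            exact hCC.symm
        _ ≤ #(GSet) := by
            apply Cardinal.mk_le_of_injective (f := fun d => (⟨FQ d, FQ_mem d⟩ : GSet))
            intro d d' h
            exact FQ_inj (congrArg Subtype.val h)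
  · rw [two_power_aleph0]
    apply le_antisymm
    · have hup : #{f ∈ GSet | ∃ W : EuclideanSpace ℝ (Fin 3) →ₗ[ℝ] EuclideanSpace ℝ (Fin 3),
          W.IsSymmetric ∧ ∀ x : Metric.sphere (0 : EuclideanSpace ℝ (Fin 3)) 1,
            f x = (inner ℝ (x : EuclideanSpace ℝ (Fin 3)) (W x) : ℝ)}
          ≤ #(EuclideanSpace ℝ (Fin 3) →ₗ[ℝ] EuclideanSpace ℝ (Fin 3)) := by
        apply Cardinal.mk_le_of_injective (f := fun f => (Exists.choose f.2.2))
        intro f g h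
        have hf := f.2.2.choose_spec
        have hg := g.2.2.choose_spec
        have h' : f.2.2.choose = g.2.2.choose := h
        apply Subtype.ext
        funext x
        rw [hf.2 x, hg.2 x, h']
      have hlin : #(EuclideanSpace ℝ (Fin 3) →ₗ[ℝ] EuclideanSpace ℝ (Fin 3))
          ≤ #(Fin 3 → EuclideanSpace ℝ (Fin 3)) := by
        apply Cardinal.mk_le_of_injective
          (f := fun W j => W (EuclideanSpace.single j (1 : ℝ)))
        intro W1 W2 h
        apply (EuclideanSpace.basisFun (Fin 3) ℝ).toBasis.ext
        intro j
        have h2 := congrFun h j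
        simpa [OrthonormalBasis.coe_toBasis, EuclideanSpace.basisFun_apply] using h2
      have hpow : #(Fin 3 → EuclideanSpace ℝ (Fin 3)) = 𝔠 := by
        rw [← Cardinal.power_def, mk_E3, Cardinal.mk_fin]
        exact power_nat_eq aleph0_le_continuum (by norm_num)
      exact hup.trans (hlin.trans (le_of_eq hpow))
    · have hlow : #ℝ ≤ #{f ∈ GSet | ∃ W : EuclideanSpace ℝ (Fin 3) →ₗ[ℝ] EuclideanSpace ℝ (Fin 3),
          W.IsSymmetric ∧ ∀ x : Metric.sphere (0 : EuclideanSpace ℝ (Fin 3)) 1,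
            f x = (inner ℝ (x : EuclideanSpace ℝ (Fin 3)) (W x) : ℝ)} := by
        apply Cardinal.mk_le_of_injective
          (f := fun c => ⟨fq c, fq_mem c, Wc c, Wc_sym c, fun x => (Wc_quad c x).symm⟩)
        intro c c' h
        have h2 := congrFun (congrArg Subtype.val h) sph_e0
        have h3 : fq c sph_e0 = fq c' sph_e0 := h2
        rwa [fq_e0, fq_e0] at h3
      rwa [Cardinal.mk_real] at hlow
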